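/- arXiv:0712.0663 — 7 statements merged into one kernel-verified Lean document; each statement's English description precedes it below -/
import Mathlib

section
/- Every finite directed graph contains a quasi-kernel, i.e., an independent set A such that every vertex is reachable from some vertex of A by a directed path of length at most 2. -/
/-- There is a directed path of length at most `n` from `x` to `y`. -/
def PathLe {V : Type*} (E : V → V → Prop) (n : ℕ) (x y : V) : Prop :=
  ∃ k ≤ n, ∃ f : ℕ → V, f 0 = x ∧ f k = y ∧ ∀ i < k, E (f i) (f (i + 1))

/-- A directed path of length at most `n` from `x` to `y` all of whose vertices lie in `W`. -/
def PathLeIn {V : Type*} (E : V → V → Prop) (W : Set V) (n : ℕ) (x y : V) : Prop :=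
  ∃ k ≤ n, ∃ f : ℕ → V, f 0 = x ∧ f k = y ∧ (∀ i ≤ k, f i ∈ W) ∧ ∀ i < k, E (f i) (f (i + 1))

/-- `A` spans no edges of `E` (in either direction). -/
def Indep {V : Type*} (E : V → V → Prop) (A : Set V) : Prop :=
  ∀ a ∈ A, ∀ b ∈ A, ¬ E a b

/-- The induced subgraph on `W` is in the class `O_n`: some independent set `A ⊆ W`
reaches every vertex of `W` by a directed path of length at most `n` inside `W`. -/
def OutClass {V : Type*} (E : V → V → Prop) (n : ℕ) (W : Set V) : Prop :=
  ∃ A ⊆ W, Indep E A ∧ ∀ v ∈ W, ∃ a ∈ A, PathLeIn E W n a v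

/-- The induced subgraph on `W` is in the class `I_n`: some independent set `A ⊆ W`
is reached from every vertex of `W` by a directed path of length at most `n` inside `W`. -/
def InClass {V : Type*} (E : V → V → Prop) (n : ℕ) (W : Set V) : Prop :=
  ∃ A ⊆ W, Indep E A ∧ ∀ v ∈ W, ∃ a ∈ A, PathLeIn E W n v a

/-- The induced subgraph on `W` is in `IO(m, ℓ)`. -/
def IOClass {V : Type*} (E : V → V → Prop) (m ℓ : ℕ) (W : Set V) : Prop :=
  ∃ V₁ V₂ : Set V, V₁ ∪ V₂ = W ∧ Disjoint V₁ V₂ ∧ InClass E m V₁ ∧ OutClass E ℓ V₂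

/-- `E` is a tournament: no loops and exactly one direction between distinct vertices. -/
def IsTournament {V : Type*} (E : V → V → Prop) : Prop :=
  (∀ x, ¬ E x x) ∧ ∀ x y, x ≠ y → (E x y ↔ ¬ E y x)

lemma pathLeIn_mono {V : Type*} {E : V → V → Prop} {W W' : Set V} {n : ℕ} {x y : V}
    (hW : W ⊆ W') (h : PathLeIn E W n x y) : PathLeIn E W' n x y := by
  obtain ⟨k, hk, f, h0, hk2, hmem, hedge⟩ := h
  exact ⟨k, hk, f, h0, hk2, fun i hi => hW (hmem i hi), hedge⟩

lemma pathLeIn_refl {V : Type*} {E : V → V → Prop} {W : Set V} {n : ℕ} {x : V}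
    (hx : x ∈ W) : PathLeIn E W n x x :=
  ⟨0, Nat.zero_le _, fun _ => x, rfl, rfl, fun _ _ => hx, fun i hi => absurd hi (Nat.not_lt_zero i)⟩

lemma pathLeIn_one {V : Type*} {E : V → V → Prop} {W : Set V} {x y : V}
    (hx : x ∈ W) (hy : y ∈ W) (h : E x y) : PathLeIn E W 2 x y := by
  refine ⟨1, by norm_num, fun i => if i = 0 then x else y, by simp, by simp, ?_, ?_⟩
  · intro i _; dsimp only; split <;> assumption
  · intro i hi
    interval_cases i
    simpa using h

lemma pathLeIn_two {V : Type*} {E : V → V → Prop} {W : Set V} {x y z : V}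
    (hx : x ∈ W) (hy : y ∈ W) (hz : z ∈ W) (h1 : E x y) (h2 : E y z) :
    PathLeIn E W 2 x z := by
  refine ⟨2, le_refl _, fun i => if i = 0 then x else if i = 1 then y else z,
    by simp, by simp, ?_, ?_⟩
  · intro i _; dsimp only; split
    · exact hx
    · split <;> assumption
  · intro i hi
    interval_cases i <;> simpa using (by first | exact h1 | exact h2 : _)

lemma qk_aux {V : Type*} (E : V → V → Prop) (hirr : ∀ v, ¬ E v v) (W : Finset V) :
    ∃ A ⊆ (W : Set V), Indep E A ∧ ∀ v ∈ W, ∃ a ∈ A, PathLeIn E (W : Set V) 2 a v := by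
  classical
  induction W using Finset.strongInduction with
  | _ W ih =>
    rcases W.eq_empty_or_nonempty with rfl | ⟨u, hu⟩
    · exact ⟨∅, by simp, fun a ha => absurd ha (Set.notMem_empty a), fun v hv => by simp at hv⟩
    · set S : Finset V := W.filter (fun w => E u w) with hS
      set W' : Finset V := W \ (insert u S) with hW'
      have hW'sub : W' ⊂ W := by
        refine Finset.ssubset_iff_of_subset (Finset.sdiff_subset) |>.mpr ⟨u, hu, ?_⟩
        simp [hW']
      obtain ⟨Q, hQsub, hQind, hQpath⟩ := ih W' hW'sub
      have hW'W : (W' : Set V) ⊆ (W : Set V) := by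
        exact_mod_cast Finset.coe_subset.mpr (Finset.sdiff_subset)
      by_cases hcase : ∃ q ∈ Q, E q u
      · obtain ⟨q, hqQ, hqu⟩ := hcase
        have hqW : q ∈ (W : Set V) := hW'W (hQsub hqQ)
        refine ⟨Q, fun x hx => hW'W (hQsub hx), hQind, fun v hv => ?_⟩
        by_cases hvW' : v ∈ W'
        · obtain ⟨a, haQ, hp⟩ := hQpath v hvW'
          exact ⟨a, haQ, pathLeIn_mono hW'W hp⟩
        · have : v = u ∨ v ∈ S := by
            have := hvW'
            simp only [hW', Finset.mem_sdiff, Finset.mem_insert, not_and, not_not] at this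
            rcases this hv with h | h
            exacts [Or.inl h, Or.inr h]
          rcases this with rfl | hvS
          · exact ⟨q, hqQ, pathLeIn_one hqW hv hqu⟩
          · have hEuv : E u v := (Finset.mem_filter.mp hvS).2
            exact ⟨q, hqQ, pathLeIn_two hqW (by exact_mod_cast hu) (by exact_mod_cast hv) hqu hEuv⟩
      · push_neg at hcase
        have huQ : ∀ q ∈ Q, ¬ E u q := by
          intro q hq hEuq
          have hqW' : q ∈ W' := hQsub hq
          simp only [hW', Finset.mem_sdiff, Finset.mem_insert, hS, Finset.mem_filter] at hqW'
          exact hqW'.2 (Or.inr ⟨hqW'.1, hEuq⟩)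
        refine ⟨insert u Q, ?_, ?_, ?_⟩
        · intro x hx
          rcases Set.mem_insert_iff.mp hx with rfl | hx
          · exact_mod_cast hu
          · exact hW'W (hQsub hx)
        · intro a ha b hb
          rcases Set.mem_insert_iff.mp ha with ha' | ha <;>
            rcases Set.mem_insert_iff.mp hb with hb' | hb
          · rw [ha', hb']; exact hirr u
          · rw [ha']; exact huQ b hb
          · rw [hb']; exact hcase a ha
          · exact hQind a ha b hb
        · intro v hv
          by_cases hvW' : v ∈ W'
          · obtain ⟨a, haQ, hp⟩ := hQpath v hvW'
            exact ⟨a, Set.mem_insert_of_mem _ haQ, pathLeIn_mono hW'W hp⟩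
          · have : v = u ∨ v ∈ S := by
              have := hvW'
              simp only [hW', Finset.mem_sdiff, Finset.mem_insert, not_and, not_not] at this
              rcases this hv with h | h
              exacts [Or.inl h, Or.inr h]
            rcases this with rfl | hvS
            · exact ⟨v, Set.mem_insert _ _, pathLeIn_refl (by exact_mod_cast hv)⟩
            · exact ⟨u, Set.mem_insert _ _,
                pathLeIn_one (by exact_mod_cast hu) (by exact_mod_cast hv)
                  (Finset.mem_filter.mp hvS).2⟩

/-- Every finite digraph contains a quasi-kernel. -/
theorem every_finite_digraph_has_quasi_kernel {V : Type*} [Fintype V]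
    (E : V → V → Prop) (hirr : ∀ v, ¬ E v v) :
    ∃ A : Set V, Indep E A ∧ ∀ v : V, ∃ a ∈ A, PathLe E 2 a v := by
  obtain ⟨A, _, hind, hpath⟩ := qk_aux E hirr Finset.univ
  refine ⟨A, hind, fun v => ?_⟩
  obtain ⟨a, ha, k, hk, f, h0, hk2, _, hedge⟩ := hpath v (Finset.mem_univ v)
  exact ⟨a, ha, k, hk, f, h0, hk2, hedge⟩
end

section
/- If an infinite tournament G=(V,E) is not in O₂ (has no quasi-kernel), then G ∈ IO(1,1): there exist vertices x,y and a partition of V into Out_G^1(y) and In_G^1(x). -/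
/-- An infinite tournament with no quasi-kernel is in `IO(1,1)`. -/
theorem infinite_tournament_io11 {V : Type*} [Infinite V] (E : V → V → Prop)
    (htour : IsTournament E)
    (h : ¬ ∃ A : Set V, Indep E A ∧ ∀ v : V, ∃ a ∈ A, PathLe E 2 a v) :
    IOClass E 1 1 Set.univ := by
  obtain ⟨hirr, hE⟩ := htour
  push_neg at h
  obtain ⟨a⟩ : Nonempty V := inferInstance
  have hindep : Indep E ({a} : Set V) := by
    intro x hx y hy
    simp only [Set.mem_singleton_iff] at hx hy
    rw [hx, hy]; exact hirr a
  obtain ⟨b, hb⟩ := h {a} hindep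
  have hnb : ¬ PathLe E 2 a b := hb a rfl
  have hab : a ≠ b := by
    rintro rfl
    exact hnb ⟨0, by omega, fun _ => a, rfl, rfl, fun i hi => by omega⟩
  have hnab : ¬ E a b := by
    intro hE'
    exact hnb ⟨1, by omega, fun i => if i = 0 then a else b, by simp, by simp, by
      intro i hi
      have : i = 0 := by omega
      simp [this, hE']⟩
  have hstep : ∀ z, E a z → ¬ E z b := by
    intro z haz hzb
    exact hnb ⟨2, le_refl _, fun i => if i = 0 then a else if i = 1 then z else b, by simp,
      by simp, by
      intro i hi
      interval_cases i <;> simp [haz, hzb]⟩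
  have hba : E b a := (hE b a hab.symm).mpr hnab
  have hbz : ∀ z, E a z → E b z := by
    intro z haz
    have hzb : z ≠ b := by rintro rfl; exact hnab haz
    exact (hE b z hzb.symm).mpr (hstep z haz)
  set V₁ : Set V := {v | v = a ∨ (E v a ∧ v ≠ b)} with hV₁
  refine ⟨V₁, V₁ᶜ, Set.union_compl_self V₁, disjoint_compl_right, ?_, ?_⟩
  · -- InClass with sink a
    have haV₁ : a ∈ V₁ := Or.inl rfl
    refine ⟨{a}, by simpa using haV₁, hindep, ?_⟩
    intro v hv
    refine ⟨a, rfl, ?_⟩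
    rcases hv with hva | ⟨hva, hvb⟩
    · exact ⟨0, by omega, fun _ => v, rfl, hva, fun i hi => Or.inl hva, fun i hi => by omega⟩
    · refine ⟨1, le_refl _, fun i => if i = 0 then v else a, by simp, by simp, ?_, ?_⟩
      · intro i hi
        by_cases h0 : i = 0 <;> simp [h0, haV₁]
        exact Or.inr ⟨hva, hvb⟩
      · intro i hi
        have : i = 0 := by omega
        simp [this, hva]
  · -- OutClass with source b
    have hbV₂ : b ∈ V₁ᶜ := by
      intro hbV
      rcases hbV with rfl | ⟨_, hbb⟩
      · exact hab rfl
      · exact hbb rfl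
    refine ⟨{b}, by simpa using hbV₂, ?_, ?_⟩
    · intro x hx y hy
      simp only [Set.mem_singleton_iff] at hx hy
      rw [hx, hy]; exact hirr b
    · intro v hv
      refine ⟨b, rfl, ?_⟩
      by_cases hvb : v = b
      · exact ⟨0, by omega, fun _ => b, rfl, hvb.symm, fun i hi => hbV₂, fun i hi => by omega⟩
      · have hva : v ≠ a := by
          rintro rfl; exact hv (Or.inl rfl)
        have hnva : ¬ E v a := by
          intro hva'; exact hv (Or.inr ⟨hva', hvb⟩)
        have hav : E a v := (hE a v hva.symm).mpr hnva
        have hbv : E b v := hbz v hav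
        refine ⟨1, le_refl _, fun i => if i = 0 then b else v, by simp, by simp, ?_, ?_⟩
        · intro i hi
          by_cases h0 : i = 0 <;> simp [h0, hbV₂, hv]
        · intro i hi
          have : i = 0 := by omega
          simp [this, hbv]
end

section
/- For an infinite tournament G ∈ O_∞, the following are equivalent: (i) G ∉ O₃; (ii) G ∉ O_n for every n ≥ 3; (iii) there is a surjective homomorphism from G onto T₃, where T₃ is the digraph on ℕ with edges {(x,y) : x ≥ y} ∪ {(x,x+1) : x ∈ ℕ}. -/
/-- For an infinite tournament `G ∈ O_∞`: `G ∉ O₃` iff `G ∉ O_n` for all `n ≥ 3`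
iff `G` maps homomorphically onto `T₃`. -/
theorem not_out3_characterization {V : Type*} [Infinite V]
    (E : V → V → Prop) (htour : IsTournament E)
    (hOinf : ∃ x : V, ∀ v : V, Relation.ReflTransGen E x v) :
    ((¬ ∃ x : V, ∀ v : V, PathLe E 3 x v) ↔
      (∀ n, 3 ≤ n → ¬ ∃ x : V, ∀ v : V, PathLe E n x v)) ∧
    ((¬ ∃ x : V, ∀ v : V, PathLe E 3 x v) ↔
      (∃ φ : V → ℕ, Function.Surjective φ ∧
        ∀ u v, E u v → (φ v ≤ φ u ∨ φ v = φ u + 1))) := by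

  classical
  obtain ⟨x₀, hx₀⟩ := hOinf
  -- every vertex is reachable from x₀ by a path of some exact length
  have hre : ∀ v : V, ∃ k, ∃ f : ℕ → V, f 0 = x₀ ∧ f k = v ∧ ∀ i < k, E (f i) (f (i + 1)) := by
    intro v
    induction hx₀ v with
    | refl => exact ⟨0, fun _ => x₀, rfl, rfl, fun i hi => absurd hi (Nat.not_lt_zero i)⟩
    | @tail b c hab hbc ih =>
      obtain ⟨k, f, h0, hk, he⟩ := ih
      refine ⟨k + 1, fun i => if i = k + 1 then c else f i, ?_, ?_, ?_⟩
      · beta_reduce; rw [if_neg (by omega)]; exact h0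
      · beta_reduce; rw [if_pos rfl]
      · intro i hi
        beta_reduce
        by_cases h1 : i = k
        · subst h1; rw [if_neg (by omega), if_pos rfl, hk]; exact hbc
        · rw [if_neg (by omega), if_neg (by omega)]; exact he i (by omega)
  let d : V → ℕ := fun v => Nat.find (hre v)
  have hdspec : ∀ v, ∃ f : ℕ → V, f 0 = x₀ ∧ f (d v) = v ∧ ∀ i < d v, E (f i) (f (i + 1)) :=
    fun v => Nat.find_spec (hre v)
  have hdle : ∀ v k, (∃ f : ℕ → V, f 0 = x₀ ∧ f k = v ∧ ∀ i < k, E (f i) (f (i + 1))) →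
      d v ≤ k := fun v k h => Nat.find_le h
  have hd0 : d x₀ = 0 :=
    Nat.le_zero.mp (hdle x₀ 0 ⟨fun _ => x₀, rfl, rfl, fun i hi => absurd hi (Nat.not_lt_zero i)⟩)
  have hstep : ∀ u v, E u v → d v ≤ d u + 1 := by
    intro u v huv
    obtain ⟨f, h0, hk, he⟩ := hdspec u
    refine hdle v (d u + 1) ⟨fun i => if i = d u + 1 then v else f i, ?_, ?_, ?_⟩
    · beta_reduce; rw [if_neg (by omega)]; exact h0
    · beta_reduce; rw [if_pos rfl]
    · intro i hi
      beta_reduce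
      by_cases h1 : i = d u
      · subst h1; rw [if_neg (by omega), if_pos rfl, hk]; exact huv
      · rw [if_neg (by omega), if_neg (by omega)]; exact he i (by omega)
  have hpref : ∀ (k : ℕ) (f : ℕ → V), f 0 = x₀ → (∀ i < k, E (f i) (f (i + 1))) →
      ∀ m ≤ k, d (f m) ≤ m :=
    fun k f h0 he m hm => hdle (f m) m ⟨f, h0, rfl, fun i hi => he i (by omega)⟩
  -- every level up to d v is realized
  have hlevel : ∀ v m, m ≤ d v → ∃ u, d u = m := by
    intro v m hm
    obtain ⟨f, h0, hk, he⟩ := hdspec v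
    rcases eq_or_lt_of_le hm with rfl | hmd
    · exact ⟨v, rfl⟩
    · refine ⟨f m, ?_⟩
      have h1 : d (f m) ≤ m := hpref (d v) f h0 he m (by omega)
      by_contra hne
      have hj : d (f m) < m := by omega
      obtain ⟨g, g0, gj, ge⟩ := hdspec (f m)
      set j := d (f m) with hjdef
      have hcon : d v ≤ j + (d v - m) := by
        refine hdle v _ ⟨fun i => if i ≤ j then g i else f (m + (i - j)), ?_, ?_, ?_⟩
        · beta_reduce; rw [if_pos (by omega)]; exact g0
        · beta_reduce; rw [if_neg (by omega), show m + (j + (d v - m) - j) = d v from by omega]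
          exact hk
        · intro i hi
          beta_reduce
          by_cases h1 : i + 1 ≤ j
          · rw [if_pos (by omega), if_pos h1]; exact ge i (by omega)
          · by_cases h2 : i ≤ j
            · have hij : i = j := by omega
              rw [if_pos h2, if_neg h1, hij, gj,
                show m + (j + 1 - j) = m + 1 from by omega]
              exact he m (by omega)
            · rw [if_neg h2, if_neg h1,
                show m + (i + 1 - j) = m + (i - j) + 1 from by omega]
              exact he _ (by omega)
      omega
  -- a surjective hom to T₃ rules out O_n for every n
  have hhom_no : ∀ (φ : V → ℕ), Function.Surjective φ →
      (∀ u v, E u v → (φ v ≤ φ u ∨ φ v = φ u + 1)) →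
      ∀ n, ¬ ∃ x : V, ∀ v : V, PathLe E n x v := by
    intro φ hsurj hφ n hx
    obtain ⟨x, hx⟩ := hx
    obtain ⟨v, hv⟩ := hsurj (φ x + n + 1)
    obtain ⟨k, hk, f, h0, hkv, he⟩ := hx v
    have key : ∀ i ≤ k, φ (f i) ≤ φ x + i := by
      intro i
      induction i with
      | zero => intro _; rw [h0]; omega
      | succ i ih =>
        intro hik
        have h1 := hφ _ _ (he i (by omega))
        have h2 := ih (by omega)
        omega
    have := key k le_rfl
    rw [hkv, hv] at this
    omega
  by_cases hB : ∃ N, ∀ v, d v ≤ N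
  · -- bounded eccentricity: O₃ holds, both sides of both iffs are false
    have hO3 : ∃ x : V, ∀ v : V, PathLe E 3 x v := by
      obtain ⟨N, hN⟩ := hB
      set e := Nat.findGreatest (fun k => ∃ v, d v = k) N with he_def
      have he_spec : ∃ v, d v = e := by
        have := Nat.findGreatest_spec (P := fun k => ∃ v, d v = k) (Nat.zero_le N)
          (show ∃ v, d v = 0 from ⟨x₀, hd0⟩)
        exact this
      have he_max : ∀ v, d v ≤ e := fun v =>
        Nat.le_findGreatest (hN v) (show ∃ u, d u = d v from ⟨v, rfl⟩)
      rcases le_or_gt e 3 with he3 | he3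
      · refine ⟨x₀, fun v => ?_⟩
        obtain ⟨f, h0, hk, he⟩ := hdspec v
        refine ⟨d v, ?_, f, h0, hk, he⟩
        have := he_max v; omega
      · obtain ⟨m, hm⟩ : ∃ m, e = m + 2 := ⟨e - 2, by omega⟩
        obtain ⟨ve, hve⟩ := he_spec
        -- ve beats everything of distance ≤ m
        have hbeat : ∀ u, d u ≤ m → E ve u := by
          intro u hu
          have hne : ve ≠ u := by intro h; rw [h] at hve; omega
          by_contra hnE
          have hEuv : E u ve := by
            by_contra hnE2
            exact hnE ((htour.2 ve u hne).mpr hnE2)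
          have := hstep u ve hEuv
          omega
        have hpred : ∀ u k, d u = k + 1 → ∃ w, E w u ∧ d w ≤ k := by
          intro u k hk1
          obtain ⟨f, h0, hk, he⟩ := hdspec u
          refine ⟨f k, ?_, hpref (d u) f h0 he k (by omega)⟩
          have : f (k + 1) = u := by rw [← hk1]; exact hk
          rw [← this]
          exact he k (by omega)
        have len1 : ∀ u, E ve u → PathLe E 3 ve u := by
          intro u h
          refine ⟨1, by omega, fun i => if i = 0 then ve else u, by simp, by simp, ?_⟩
          intro i hi
          have : i = 0 := by omega
          subst this
          simpa using h
        have len2 : ∀ u w, E w u → d w ≤ m → PathLe E 3 ve u := by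
          intro u w hwu hwm
          refine ⟨2, by omega, fun i => if i = 0 then ve else if i = 1 then w else u,
            by simp, by simp, ?_⟩
          intro i hi
          interval_cases i
          · simpa using hbeat w hwm
          · simpa using hwu
        refine ⟨ve, fun u => ?_⟩
        have hue : d u ≤ m + 2 := by have := he_max u; omega
        rcases Nat.lt_or_ge (d u) (m + 1) with h1 | h1
        · exact len1 u (hbeat u (by omega))
        · rcases Nat.lt_or_ge (d u) (m + 2) with h2 | h2
          · -- d u = m + 1
            obtain ⟨w, hwu, hwm⟩ := hpred u m (by omega)
            exact len2 u w hwu hwm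
          · -- d u = m + 2
            obtain ⟨w, hwu, hwm⟩ := hpred u (m + 1) (by omega)
            rcases Nat.lt_or_ge (d w) (m + 1) with h3 | h3
            · exact len2 u w hwu (by omega)
            · -- d w = m + 1
              obtain ⟨w', hw'w, hw'm⟩ := hpred w m (by omega)
              refine ⟨3, le_rfl, fun i => if i = 0 then ve else if i = 1 then w' else
                if i = 2 then w else u, by simp, by simp, ?_⟩
              intro i hi
              interval_cases i
              · simpa using hbeat w' hw'm
              · simpa using hw'w
              · simpa using hwu
    refine ⟨⟨fun h => absurd hO3 h, fun h => absurd hO3 (h 3 le_rfl)⟩,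
      ⟨fun h => absurd hO3 h, fun h => ?_⟩⟩
    obtain ⟨φ, hs, hφ⟩ := h
    exact hhom_no φ hs hφ 3
  · -- unbounded eccentricity: d itself is a surjective hom to T₃
    have hφhom : ∀ u v, E u v → (d v ≤ d u ∨ d v = d u + 1) := by
      intro u v h
      have := hstep u v h
      omega
    have hsurj : Function.Surjective d := by
      intro m
      push_neg at hB
      obtain ⟨v, hv⟩ := hB m
      exact hlevel v m (by omega)
    have hno : ∀ n, ¬ ∃ x : V, ∀ v : V, PathLe E n x v := fun n => hhom_no d hsurj hφhom n
    exact ⟨⟨fun _ n _ => hno n, fun _ => hno 3⟩,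
      ⟨fun _ => ⟨d, hsurj, hφhom⟩, fun _ => hno 3⟩⟩
end

section
/- In any tournament G ∈ O_∞, if G ∈ O_n for some n ≥ 3, then G ∈ O₃. Specifically, if V = Out_G^n(x) but V ≠ Out_G^{n-1}(x), then for any y ∈ Out_G^n(x)∖Out_G^{n-1}(x), V = Out_G^3(y). -/
/-- In a tournament in `O_∞`, membership in `O_n` for some `n ≥ 3` gives membership in `O₃`:
if `V = Out^n(x)` but `V ≠ Out^{n-1}(x)` and `y ∈ Out^n(x) ∖ Out^{n-1}(x)`,
then `V = Out³(y)`. -/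
theorem out_n_to_out_three {V : Type*} (E : V → V → Prop) (htour : IsTournament E)
    (hOinf : ∃ x : V, ∀ v : V, Relation.ReflTransGen E x v)
    (n : ℕ) (hn : 3 ≤ n) (x y : V)
    (hx : ∀ v : V, PathLe E n x v)
    (hy₁ : PathLe E n x y) (hy₂ : ¬ PathLe E (n - 1) x y) :
    ∀ v : V, PathLe E 3 y v := by
  intro v
  obtain ⟨k, hk, f, hf0, hfk, hfe⟩ := hx v
  -- helper: y beats any vertex reachable from x via f-prefix of length ≤ n-2
  have key : ∀ m, m ≤ k → m ≤ n - 2 → E y (f m) := by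
    intro m hmk hm
    have hpath : PathLe E (n - 1) x (f m) :=
      ⟨m, by omega, f, hf0, rfl, fun i hi => hfe i (by omega)⟩
    have hne : f m ≠ y := fun h => hy₂ (h ▸ hpath)
    by_contra hnyv
    have hEvy : E (f m) y := by
      have := (htour.2 y (f m) (Ne.symm hne)).not
      tauto
    apply hy₂
    refine ⟨m + 1, by omega, fun i => if i = m + 1 then y else f i, by simp [hf0], by simp, ?_⟩
    intro i hi
    rcases Nat.lt_or_ge i m with h | h
    · simpa [Nat.ne_of_lt (by omega : i < m + 1), Nat.ne_of_lt (by omega : i + 1 < m + 1), Nat.ne_of_lt h] using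
        hfe i (by omega)
    · have : i = m := by omega
      subst this
      simpa [Nat.ne_of_lt (by omega : i < i + 1)] using hEvy
  rcases Nat.lt_or_ge k (n - 1) with hkle | hkge
  · -- k ≤ n - 2 : direct edge y → v
    have h1 : E y v := hfk ▸ key k le_rfl (by omega)
    exact ⟨1, by omega, fun i => if i = 0 then y else v, by simp, by simp, by
      intro i hi
      have : i = 0 := by omega
      subst this
      simpa using h1⟩
  · -- k ≥ n - 1 ≥ 2 : path y → f(k-2) → f(k-1) → f k = v
    have hk2 : 2 ≤ k := by omega
    have h1 : E y (f (k - 2)) := key (k - 2) (by omega) (by omega)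
    refine ⟨3, le_rfl, fun i => if i = 0 then y else f (k - 2 + i - 1), by simp, ?_, ?_⟩
    · have : k - 2 + 3 - 1 = k := by omega
      simp [this, hfk]
    · intro i hi
      interval_cases i
      · have : k - 2 + 1 - 1 = k - 2 := by omega
        simpa [this] using h1
      · have e1 : k - 2 + 1 - 1 = k - 2 := by omega
        have e2 : k - 2 + 2 - 1 = k - 2 + 1 := by omega
        simpa [e1, e2] using hfe (k - 2) (by omega)
      · have e2 : k - 2 + 2 - 1 = k - 1 := by omega
        have e3 : k - 2 + 3 - 1 = k := by omega
        have e4 : k - 1 + 1 = k := by omega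
        simpa [e2, e3, e4] using hfe (k - 1) (by omega)
end

section
/- There exists an infinite tournament that is in O₃ but not in O₂, i.e., some vertex reaches every vertex by a directed path of length at most 3, but no vertex reaches all vertices by directed paths of length at most 2. -/
/-- The vertex type: a root plus three copies of `ℤ`. -/
abbrev Vx : Type := Option (Fin 3 × ℤ)

/-- The edge relation of our tournament. -/
def Ed : Vx → Vx → Prop
  | none, none => False
  | none, some (i, _) => i = 0
  | some (i, _), none => i ≠ 0
  | some (i, m), some (j, n) => if i = j then m < n else j = i + 1

lemma ed_some_some (i j : Fin 3) (m n : ℤ) :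
    Ed (some (i, m)) (some (j, n)) = if i = j then m < n else j = i + 1 := rfl

lemma ed_none_some (i : Fin 3) (m : ℤ) : Ed none (some (i, m)) = (i = 0) := rfl

lemma ed_some_none (i : Fin 3) (m : ℤ) : Ed (some (i, m)) none = (i ≠ 0) := rfl

lemma fin3_opp : ∀ i j : Fin 3, ¬ i = j → ((j = i + 1) ↔ ¬ i = j + 1) := by decide

lemma fin3_cyc : ∀ i j : Fin 3, ¬ i = j → (j = i + 1 ∧ i = j + 1) → False := by decide

lemma pathLe_two_iff {V : Type*} (E : V → V → Prop) (x v : V) :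
    PathLe E 2 x v ↔ v = x ∨ E x v ∨ ∃ z, E x z ∧ E z v := by
  constructor
  · rintro ⟨k, hk, f, h0, hk', he⟩
    interval_cases k
    · left; rw [← h0, hk']
    · right; left; rw [← h0, ← hk']; exact he 0 (by norm_num)
    · right; right
      exact ⟨f 1, by rw [← h0]; exact he 0 (by norm_num),
        by rw [← hk']; exact he 1 (by norm_num)⟩
  · rintro (rfl | h | ⟨z, h1, h2⟩)
    · exact ⟨0, by norm_num, fun _ => v, rfl, rfl, by omega⟩
    · refine ⟨1, by norm_num, fun n => if n = 0 then x else v, by simp, by simp, ?_⟩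
      intro i hi
      have : i = 0 := by omega
      subst this; simpa using h
    · refine ⟨2, by norm_num,
        fun n => if n = 0 then x else if n = 1 then z else v, by simp, by simp, ?_⟩
      intro i hi
      interval_cases i
      · simpa using h1
      · simpa using h2

lemma ed_tournament : IsTournament Ed := by
  constructor
  · rintro (_ | ⟨i, m⟩)
    · exact id
    · rw [ed_some_some, if_pos rfl]; omega
  · rintro (_ | ⟨i, m⟩) (_ | ⟨j, n⟩) hne
    · simp at hne
    · rw [ed_none_some, ed_some_none]; simp
    · rw [ed_some_none, ed_none_some]
    · by_cases hij : i = j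
      · subst hij
        have hmn : m ≠ n := fun h => hne (by rw [h])
        rw [ed_some_some, ed_some_some, if_pos rfl, if_pos rfl]
        omega
      · rw [ed_some_some, ed_some_some, if_neg hij, if_neg (Ne.symm hij)]
        exact fin3_opp i j hij

/-- There is an infinite tournament in `O₃ ∖ O₂`. -/
theorem exists_tournament_out3_not_out2 :
    ∃ (V : Type) (E : V → V → Prop), Infinite V ∧ IsTournament E ∧
      (∃ x : V, ∀ v : V, PathLe E 3 x v) ∧
      ¬ ∃ x : V, ∀ v : V, PathLe E 2 x v := by
  refine ⟨Vx, Ed, by infer_instance, ed_tournament, ?_, ?_⟩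
  · -- The root reaches everything in at most 3 steps.
    refine ⟨none, ?_⟩
    rintro (_ | ⟨i, m⟩)
    · exact ⟨0, by norm_num, fun _ => none, rfl, rfl, by omega⟩
    · fin_cases i
      · -- i = 0
        refine ⟨1, by norm_num, fun n => if n = 0 then none else some (0, m),
          by simp, by simp, ?_⟩
        intro k hk
        have : k = 0 := by omega
        subst this
        exact rfl
      · -- i = 1
        refine ⟨2, by norm_num,
          fun n => if n = 0 then none else if n = 1 then some (0, 0) else some (1, m),
          by simp, by simp, ?_⟩
        intro k hk
        interval_cases k
        · exact rfl
        · show Ed (some (0, 0)) (some (1, m))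
          rw [ed_some_some, if_neg (by decide)]
          decide
      · -- i = 2
        refine ⟨3, by norm_num,
          fun n => if n = 0 then none else if n = 1 then some (0, 0)
            else if n = 2 then some (1, 0) else some (2, m),
          by simp, by simp, ?_⟩
        intro k hk
        interval_cases k
        · exact rfl
        · show Ed (some (0, 0)) (some (1, 0))
          rw [ed_some_some, if_neg (by decide)]
          decide
        · show Ed (some (1, 0)) (some (2, m))
          rw [ed_some_some, if_neg (by decide)]
          decide
  · -- No vertex reaches everything in at most 2 steps.
    rintro ⟨x, hx⟩
    match x with
    | none =>
      have h := (pathLe_two_iff Ed none (some (2, 0))).mp (hx (some (2, 0)))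
      rcases h with h | h | ⟨z, h1, h2⟩
      · simp at h
      · rw [ed_none_some] at h
        exact absurd h (by decide)
      · match z with
        | none => exact h1
        | some (j, n) =>
          have hj : j = 0 := h1
          subst hj
          rw [ed_some_some, if_neg (by decide)] at h2
          exact absurd h2 (by decide)
    | some (i, m) =>
      have h := (pathLe_two_iff Ed (some (i, m)) (some (i, m - 1))).mp
        (hx (some (i, m - 1)))
      rcases h with h | h | ⟨z, h1, h2⟩
      · simp only [Option.some.injEq, Prod.mk.injEq] at h
        omega
      · rw [ed_some_some, if_pos rfl] at h
        omega
      · match z with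
        | none =>
          rw [ed_some_none] at h1
          rw [ed_none_some] at h2
          exact h1 h2
        | some (j, n) =>
          by_cases hij : i = j
          · subst hij
            rw [ed_some_some, if_pos rfl] at h1 h2
            omega
          · rw [ed_some_some, if_neg hij] at h1
            rw [ed_some_some, if_neg (Ne.symm hij)] at h2
            exact fin3_cyc i j hij ⟨h1, h2⟩
end

section
/- Let G=(V,E,T) be a finite terminated digraph such that (V,E) is a tournament. Then G^∞ ∈ O₂ if and only if there exists a terminal vertex v ∈ T with V = Out_G^2(v). -/
/-- A vertex of `G^∞`: a finite sequence of nonterminal vertices followed by one terminal vertex. -/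
def IsGVtx {V : Type*} (T : Set V) (x : List V) : Prop :=
  ∃ l t, x = l ++ [t] ∧ (∀ v ∈ l, v ∉ T) ∧ t ∈ T

/-- The edge relation of `G^∞`: `(x, y)` is an edge iff `(x(Δ), y(Δ)) ∈ E` where `Δ`
is the first coordinate where `x` and `y` differ. -/
def GEdge {V : Type*} (E : V → V → Prop) (T : Set V)
    (x y : {x : List V // IsGVtx T x}) : Prop :=
  ∃ i a b, (x : List V).take i = (y : List V).take i ∧
    (x : List V)[i]? = some a ∧ (y : List V)[i]? = some b ∧ a ≠ b ∧ E a b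

section AuxLemmas
variable {V : Type*}

lemma take_eq_getElem? {x y : List V} {i j : ℕ} (h : x.take i = y.take i) (hj : j < i) :
    x[j]? = y[j]? := by
  have hx : (x.take i)[j]? = x[j]? := by rw [List.getElem?_take, if_pos hj]
  have hy : (y.take i)[j]? = y[j]? := by rw [List.getElem?_take, if_pos hj]
  rw [← hx, ← hy, h]

lemma firstDiff (x : List V) : ∀ (y : List V), x ≠ y →
    x <+: y ∨ y <+: x ∨
      ∃ i a b, x.take i = y.take i ∧ x[i]? = some a ∧ y[i]? = some b ∧ a ≠ b := by
  induction x with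
  | nil => intro y _; exact Or.inl List.nil_prefix
  | cons c x' ih =>
    intro y h
    rcases y with _ | ⟨d, y'⟩
    · exact Or.inr (Or.inl List.nil_prefix)
    · by_cases hcd : c = d
      · subst hcd
        rcases ih y' (fun he => h (by rw [he])) with hp | hp | ⟨i, a, b, h1, h2, h3, h4⟩
        · obtain ⟨s, hs⟩ := hp; exact Or.inl ⟨s, by simp [hs]⟩
        · obtain ⟨s, hs⟩ := hp; exact Or.inr (Or.inl ⟨s, by simp [hs]⟩)
        · exact Or.inr (Or.inr ⟨i + 1, a, b, by simp [h1], by simpa using h2,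
            by simpa using h3, h4⟩)
      · exact Or.inr (Or.inr ⟨0, c, d, rfl, by simp, by simp, hcd⟩)

lemma gvtx_prefix {T : Set V} {x y : List V} (hx : IsGVtx T x) (hy : IsGVtx T y)
    (h : x <+: y) : x = y := by
  obtain ⟨l, t, rfl, hl, ht⟩ := hx
  obtain ⟨l', t', rfl, hl', ht'⟩ := hy
  obtain ⟨s, hs⟩ := h
  rcases s with _ | ⟨c, s⟩
  · simpa using hs
  · exfalso
    have hlen : l.length < l'.length := by
      have := congrArg List.length hs
      simp at this
      omega
    have e1 : ((l ++ [t]) ++ c :: s)[l.length]? = some t := by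
      rw [List.getElem?_append, if_pos (by simp)]
      rw [List.getElem?_append_right (le_refl _)]
      simp
    have e2 : (l' ++ [t'])[l.length]? = l'[l.length]? := by
      rw [List.getElem?_append, if_pos hlen]
    rw [hs, e2] at e1
    exact hl' t (List.mem_of_getElem? e1) ht

lemma gedge_total {E : V → V → Prop} (htour : IsTournament E) {T : Set V}
    (x y : {x : List V // IsGVtx T x}) (h : x ≠ y) :
    GEdge E T x y ∨ GEdge E T y x := by
  have hne : (x : List V) ≠ y := fun he => h (Subtype.ext he)
  rcases firstDiff x.1 y.1 hne with hp | hp | ⟨i, a, b, h1, h2, h3, h4⟩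
  · exact absurd (gvtx_prefix x.2 y.2 hp) hne
  · exact absurd (gvtx_prefix y.2 x.2 hp).symm hne
  · by_cases hE : E a b
    · exact Or.inl ⟨i, a, b, h1, h2, h3, h4, hE⟩
    · refine Or.inr ⟨i, b, a, h1.symm, h3, h2, h4.symm, ?_⟩
      by_contra hba
      exact hE ((htour.2 a b h4).mpr hba)

end AuxLemmas

/-- For a finite terminated tournament `G = (V,E,T)`:
`G^∞ ∈ O₂` iff some terminal vertex `v` has `V = Out²(v)`. -/
theorem ginf_out2_iff {V : Type*} [Fintype V] (E : V → V → Prop)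
    (htour : IsTournament E) (T : Set V) (hT : T.Nonempty) :
    (∃ A : Set {x : List V // IsGVtx T x}, Indep (GEdge E T) A ∧
      ∀ v, ∃ a ∈ A, PathLe (GEdge E T) 2 a v) ↔
    (∃ v ∈ T, ∀ u : V, PathLe E 2 v u) := by
  obtain ⟨t₀, ht₀⟩ := hT
  constructor
  · rintro ⟨A, hInd, hreach⟩
    have hbase : IsGVtx T [t₀] := ⟨[], t₀, rfl, by simp, ht₀⟩
    obtain ⟨a, haA, -⟩ := hreach ⟨[t₀], hbase⟩
    have hsingle : ∀ a' ∈ A, a' = a := by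
      intro a' ha'
      by_contra hne
      rcases gedge_total htour a' a hne with he | he
      · exact hInd a' ha' a haA he
      · exact hInd a haA a' ha' he
    obtain ⟨l, t, hav, hl, ht⟩ := a.2
    refine ⟨t, ht, ?_⟩
    intro u
    by_cases hut : u = t
    · exact ⟨0, by omega, fun _ => t, rfl, by rw [hut], fun i hi => absurd hi (by omega)⟩
    obtain ⟨r, hy⟩ : ∃ r, IsGVtx T (l ++ u :: r) := by
      by_cases huT : u ∈ T
      · exact ⟨[], l, u, rfl, hl, huT⟩
      · refine ⟨[t₀], l ++ [u], t₀, by simp, ?_, ht₀⟩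
        intro v hv
        rcases List.mem_append.mp hv with h | h
        · exact hl v h
        · simpa [List.mem_singleton.mp h] using huT
    set m := l.length with hm
    have ham : (a : List V)[m]? = some t := by
      rw [hav, List.getElem?_append_right (le_refl _)]
      simp
    have hym : (l ++ u :: r)[m]? = some u := by
      rw [List.getElem?_append_right (le_refl _)]
      simp
    have hatake : (a : List V).take m = l := by rw [hav]; exact List.take_left
    have hytake : (l ++ u :: r).take m = l := List.take_left
    have hlow : ∀ j < m, (a : List V)[j]? = (l ++ u :: r)[j]? := by
      intro j hj
      rw [hav, List.getElem?_append, if_pos hj, List.getElem?_append, if_pos hj]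
    have hhigh : ∀ i, m < i → (a : List V)[i]? = none := by
      intro i hi
      rw [hav]
      exact List.getElem?_eq_none (by simp; omega)
    obtain ⟨a', ha'A, hpath⟩ := hreach ⟨l ++ u :: r, hy⟩
    rw [hsingle a' ha'A] at hpath
    obtain ⟨k, hk2, f, hf0, hfk, hfe⟩ := hpath
    interval_cases k
    · have hval : (a : List V) = l ++ u :: r := congrArg Subtype.val (hf0.symm.trans hfk)
      rw [hval, hym] at ham
      exact absurd (Option.some.inj ham) hut
    · have e01 := hfe 0 (by omega)
      rw [hf0, hfk] at e01
      obtain ⟨i, α, β, p1, p2, p3, p4, p5⟩ := e01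
      have p3' : (l ++ u :: r)[i]? = some β := p3
      rcases lt_trichotomy i m with hi | hi | hi
      · exfalso
        have : some α = some β := by rw [← p2, hlow i hi, p3']
        exact p4 (Option.some.inj this)
      · subst hi
        have hα : t = α := Option.some.inj (ham.symm.trans p2)
        have hβ : u = β := Option.some.inj (hym.symm.trans p3')
        refine ⟨1, one_le_two, fun n => if n = 0 then t else u, by simp, by norm_num, ?_⟩
        intro i hi
        interval_cases i
        simpa [hα, hβ] using p5
      · rw [hhigh i hi] at p2; exact absurd p2 (by simp)
    · have e01 := hfe 0 (by omega)
      have e12 := hfe 1 (by omega)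
      rw [hf0] at e01
      rw [show (1 : ℕ) + 1 = 2 from rfl, hfk] at e12
      obtain ⟨i, α, zi, p1, p2, p3, p4, p5⟩ := e01
      obtain ⟨j, zj, β, q1, q2, q3, q4, q5⟩ := e12
      have p1' : (a : List V).take i = ((f 1 : List V)).take i := p1
      have p3'' : ((f 1 : List V))[i]? = some zi := p3
      have q1' : ((f 1 : List V)).take j = (l ++ u :: r).take j := q1
      have q3' : (l ++ u :: r)[j]? = some β := q3
      rcases lt_trichotomy i m with hi | hi | hi
      · exfalso
        have hyi : (l ++ u :: r)[i]? = some α := by rw [← hlow i hi]; exact p2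
        rcases lt_trichotomy j i with hj | hj | hj
        · have h1 : ((f 1 : List V))[j]? = (a : List V)[j]? :=
            (take_eq_getElem? p1' hj).symm
          have : some zj = some β := by rw [← q2, h1, hlow j (hj.trans hi), q3']
          exact q4 (Option.some.inj this)
        · subst hj
          have h2 : zj = zi := Option.some.inj (q2.symm.trans p3'')
          have h3 : β = α := Option.some.inj (q3'.symm.trans hyi)
          exact (htour.2 α zi p4).mp p5 (h3 ▸ h2 ▸ q5)
        · have h1 : ((f 1 : List V))[i]? = (l ++ u :: r)[i]? := take_eq_getElem? q1' hj
          exact p4 (Option.some.inj (p3''.symm.trans (h1.trans hyi))).symm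
      · subst hi
        have hα : t = α := Option.some.inj (ham.symm.trans p2)
        have hztake : ((f 1 : List V)).take m = l := p1'.symm.trans hatake
        rcases lt_trichotomy j m with hj | hj | hj
        · exfalso
          have h12 : ((f 1 : List V))[j]? = (l ++ u :: r)[j]? :=
            take_eq_getElem? (hztake.trans hytake.symm) hj
          have : some zj = some β := by rw [← q2, h12, q3']
          exact q4 (Option.some.inj this)
        · subst hj
          have h2 : zj = zi := Option.some.inj (q2.symm.trans p3'')
          have hβ : u = β := Option.some.inj (hym.symm.trans q3')
          refine ⟨2, le_refl 2, fun n => if n = 0 then t else if n = 1 then zi else u,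
            by simp, by norm_num, ?_⟩
          intro i' hi'
          interval_cases i'
          · simpa [hα] using p5
          · have hE2 : E zi u := by rw [hβ, ← h2]; exact q5
            simpa using hE2
        · have h1 : ((f 1 : List V))[m]? = (l ++ u :: r)[m]? := take_eq_getElem? q1' hj
          have hziu : zi = u := Option.some.inj (p3''.symm.trans (h1.trans hym))
          refine ⟨1, one_le_two, fun n => if n = 0 then t else u, by simp, by norm_num, ?_⟩
          intro i' hi'
          interval_cases i'
          have hE1 : E t u := by rw [hα, ← hziu]; exact p5
          simpa using hE1
      · rw [hhigh i hi] at p2; exact absurd p2 (by simp)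
  · rintro ⟨v, hvT, hv⟩
    have hvx : IsGVtx T [v] := ⟨[], v, rfl, by simp, hvT⟩
    refine ⟨{⟨[v], hvx⟩}, ?_, ?_⟩
    · rintro x hx y hy hE
      rw [Set.mem_singleton_iff] at hx hy
      subst hx; subst hy
      obtain ⟨i, α, β, h1, h2, h3, h4, -⟩ := hE
      rw [h2] at h3
      exact h4 (Option.some.inj h3)
    · intro y
      refine ⟨⟨[v], hvx⟩, rfl, ?_⟩
      obtain ⟨l, t, hyv, hl, ht⟩ := y.2
      obtain ⟨u, rest, hyu, huT⟩ :
          ∃ u rest, (y : List V) = u :: rest ∧ (u ∈ T → (y : List V) = [u]) := by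
        rcases l with _ | ⟨u₀, l'⟩
        · exact ⟨t, [], by simp [hyv], fun _ => by simp [hyv]⟩
        · exact ⟨u₀, l' ++ [t], by simp [hyv], fun hu => absurd hu (hl u₀ (by simp))⟩
      have hy0 : (y : List V)[0]? = some u := by rw [hyu]; simp
      obtain ⟨k, hk, g, hg0, hgk, hge⟩ := hv u
      have hyeqv : u = v → (⟨[v], hvx⟩ : {x : List V // IsGVtx T x}) = y := by
        intro huv
        apply Subtype.ext
        show [v] = (y : List V)
        rw [huT (huv ▸ hvT), huv]
      interval_cases k
      · have huv : u = v := by rw [← hgk, hg0]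
        exact ⟨0, by omega, fun _ => ⟨[v], hvx⟩, rfl, hyeqv huv,
          fun i hi => absurd hi (by omega)⟩
      · have hE1 : E v u := by
          have := hge 0 (by omega)
          rwa [hg0, hgk] at this
        have huv : u ≠ v := fun h => htour.1 v (h ▸ hE1)
        have hedge : GEdge E T ⟨[v], hvx⟩ y :=
          ⟨0, v, u, by simp, by simp, hy0, huv.symm, hE1⟩
        refine ⟨1, one_le_two, fun n => if n = 0 then ⟨[v], hvx⟩ else y,
          by simp, by norm_num, ?_⟩
        intro i hi
        interval_cases i
        simpa using hedge
      · have hE1 : E v (g 1) := by have := hge 0 (by omega); rwa [hg0] at this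
        have hE2 : E (g 1) u := by
          have := hge 1 (by omega)
          rwa [show (1 : ℕ) + 1 = 2 from rfl, hgk] at this
        by_cases huv : u = v
        · exact ⟨0, by omega, fun _ => ⟨[v], hvx⟩, rfl, hyeqv huv,
            fun i hi => absurd hi (by omega)⟩
        · set w := g 1 with hw
          have hwv : w ≠ v := fun h => htour.1 v (h ▸ hE1)
          have hwu : w ≠ u := fun h => htour.1 u (h ▸ hE2)
          obtain ⟨zr, hz⟩ : ∃ zr, IsGVtx T (w :: zr) := by
            by_cases hwT : w ∈ T
            · exact ⟨[], [], w, rfl, by simp, hwT⟩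
            · refine ⟨l ++ [t], w :: l, t, by simp, ?_, ht⟩
              intro x hx
              rcases List.mem_cons.mp hx with h | h
              · exact h ▸ hwT
              · exact hl x h
          have hedge1 : GEdge E T ⟨[v], hvx⟩ ⟨w :: zr, hz⟩ :=
            ⟨0, v, w, by simp, by simp, by simp, hwv.symm, hE1⟩
          have hedge2 : GEdge E T ⟨w :: zr, hz⟩ y :=
            ⟨0, w, u, by simp, by simp, hy0, hwu, hE2⟩
          refine ⟨2, le_refl 2,
            fun n => if n = 0 then ⟨[v], hvx⟩ else if n = 1 then ⟨w :: zr, hz⟩ else y,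
            by simp, by norm_num, ?_⟩
          intro i hi
          interval_cases i
          · simpa using hedge1
          · simpa using hedge2
end

section
/- For every finite terminated digraph G=(V,E,T), the infinite digraph G^∞ is in IO(2,2): its vertex set partitions into two parts, one inducing a subgraph with a quasi-sink and the other a subgraph with a quasi-kernel. -/
/-! ### Auxiliary development -/

open scoped Classical

set_option linter.unusedSectionVars false

namespace Ginf

variable {V : Type*}

/-- `x` decomposes as read-prefix `w` (all in `R`), stop letter `s ∉ R`, and rest `r`. -/
def SplitAt (R : Set V) (x w : List V) (s : V) (r : List V) : Prop :=
  x = w ++ s :: r ∧ (∀ v ∈ w, v ∈ R) ∧ s ∉ R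

theorem split_exists {R T : Set V} (hRT : ∀ v ∈ R, v ∉ T) :
    ∀ x : List V, IsGVtx T x → ∃ w s r, SplitAt R x w s r := by
  intro x
  induction x with
  | nil => rintro ⟨l, t, h, -, -⟩; exact absurd h (by simp)
  | cons v x ih =>
    rintro ⟨l, t, h, hl, ht⟩
    by_cases hv : v ∈ R
    · match l, h with
      | [], h =>
        rw [List.nil_append] at h
        obtain ⟨rfl, rfl⟩ : v = t ∧ x = [] := by
          have := h
          simp only [List.cons.injEq] at this
          exact ⟨this.1, this.2⟩
        exact absurd ht (hRT _ hv)
      | (a :: l'), h =>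
        simp only [List.cons_append, List.cons.injEq] at h
        obtain ⟨rfl, h2⟩ := h
        obtain ⟨w, s, r, hw, hmem, hs⟩ :=
          ih ⟨l', t, h2, fun u hu => hl u (by simp [hu]), ht⟩
        refine ⟨v :: w, s, r, ?_, ?_, hs⟩
        · show v :: x = (v :: w) ++ s :: r
          rw [hw]; rfl
        · intro u hu
          rcases List.mem_cons.mp hu with rfl | hu
          · exact hv
          · exact hmem u hu
    · exact ⟨[], v, x, ⟨by simp, by simp, hv⟩⟩

theorem split_unique {R : Set V} {x w₁ w₂ : List V} {s₁ s₂ : V} {r₁ r₂ : List V}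
    (h₁ : SplitAt R x w₁ s₁ r₁) (h₂ : SplitAt R x w₂ s₂ r₂) :
    w₁ = w₂ ∧ s₁ = s₂ ∧ r₁ = r₂ := by
  obtain ⟨e₁, m₁, n₁⟩ := h₁
  obtain ⟨e₂, m₂, n₂⟩ := h₂
  subst e₁
  induction w₁ generalizing w₂ with
  | nil =>
    match w₂, e₂ with
    | [], e₂ =>
      simp only [List.nil_append, List.cons.injEq] at e₂
      exact ⟨rfl, e₂.1, e₂.2⟩
    | (b :: w₂), e₂ =>
      simp only [List.nil_append, List.cons_append, List.cons.injEq] at e₂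
      exact absurd (e₂.1 ▸ m₂ b (by simp)) n₁
  | cons a w₁ ih =>
    match w₂, e₂ with
    | [], e₂ =>
      simp only [List.cons_append, List.nil_append, List.cons.injEq] at e₂
      exact absurd (e₂.1.symm ▸ m₁ a (by simp)) n₂
    | (b :: w₂), e₂ =>
      simp only [List.cons_append, List.cons.injEq] at e₂
      obtain ⟨rfl, e₂⟩ := e₂
      obtain ⟨h1, h2, h3⟩ := ih (fun v hv => m₁ v (by simp [hv]))
        (fun v hv => m₂ v (by simp [hv])) e₂
      exact ⟨by rw [h1], h2, h3⟩

/-- Chvátal–Lovász: every finite digraph has a quasi-kernel (with middles outside `K`). -/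
theorem exists_qk [Fintype V] (E : V → V → Prop) (W : Finset V) :
    ∃ K : Finset V, K ⊆ W ∧ (∀ a ∈ K, ∀ b ∈ K, a ≠ b → ¬E a b) ∧
      ∀ v ∈ W, v ∉ K → ((∃ c ∈ K, E v c) ∨
        ∃ u ∈ W, u ∉ K ∧ u ≠ v ∧ E v u ∧ ∃ c ∈ K, E u c) := by
  have main : ∀ n (W : Finset V), W.card ≤ n → ∃ K : Finset V, K ⊆ W ∧
      (∀ a ∈ K, ∀ b ∈ K, a ≠ b → ¬E a b) ∧
      ∀ v ∈ W, v ∉ K → ((∃ c ∈ K, E v c) ∨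
        ∃ u ∈ W, u ∉ K ∧ u ≠ v ∧ E v u ∧ ∃ c ∈ K, E u c) := by
    intro n
    induction n with
    | zero =>
      intro W hW
      refine ⟨∅, by simp, by simp, ?_⟩
      intro v hv
      exact absurd (Finset.card_eq_zero.mp (Nat.le_zero.mp hW) ▸ hv) (by simp)
    | succ n ih =>
      intro W hW
      rcases W.eq_empty_or_nonempty with rfl | ⟨x, hx⟩
      · exact ⟨∅, by simp, by simp, by simp⟩
      · set W' : Finset V := W.filter (fun v => ¬E v x ∧ v ≠ x) with hW'def
        have hW'sub : W' ⊆ W := Finset.filter_subset _ _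
        have hxW' : x ∉ W' := by simp [hW'def]
        have hW'card : W'.card ≤ n := by
          have h1 : W' ⊆ W.erase x := by
            intro v hv
            simp only [hW'def, Finset.mem_filter] at hv
            exact Finset.mem_erase.mpr ⟨hv.2.2, hv.1⟩
          calc W'.card ≤ (W.erase x).card := Finset.card_le_card h1
            _ = W.card - 1 := Finset.card_erase_of_mem hx
            _ ≤ n := by omega
        obtain ⟨K', hK'sub, hK'ind, hK'cov⟩ := ih W' hW'card
        by_cases hq : ∃ q ∈ K', E x q
        · -- K := K'
          refine ⟨K', hK'sub.trans hW'sub, hK'ind, ?_⟩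
          intro v hv hvK
          by_cases hvW' : v ∈ W'
          · rcases hK'cov v hvW' hvK with h | ⟨u, hu, h⟩
            · exact Or.inl h
            · exact Or.inr ⟨u, hW'sub hu, h⟩
          · -- v ∉ W' : either v = x or E v x
            by_cases hvx : v = x
            · subst hvx
              obtain ⟨q, hqK, hq⟩ := hq
              exact Or.inl ⟨q, hqK, hq⟩
            · have hEvx : E v x := by
                by_contra hne
                exact hvW' (by simp [hW'def, hv, hne, hvx])
              obtain ⟨q, hqK, hq⟩ := hq
              exact Or.inr ⟨x, hx, fun hxK => hxW' (hK'sub hxK), fun he => hvx he.symm,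
                hEvx, q, hqK, hq⟩
        · -- K := insert x K'
          push_neg at hq
          refine ⟨insert x K', Finset.insert_subset hx (hK'sub.trans hW'sub), ?_, ?_⟩
          · intro a ha b hb hab
            rcases Finset.mem_insert.mp ha with ha' | ha' <;>
              rcases Finset.mem_insert.mp hb with hb' | hb'
            · exact absurd (ha'.trans hb'.symm) hab
            · subst ha'; exact hq b hb'
            · subst hb'
              have := hK'sub ha'
              simp only [hW'def, Finset.mem_filter] at this
              exact this.2.1
            · exact hK'ind a ha' b hb' hab
          · intro v hv hvK
            have hvx : v ≠ x := fun h => hvK (h ▸ Finset.mem_insert_self x K')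
            by_cases hvW' : v ∈ W'
            · rcases hK'cov v hvW' (fun h => hvK (Finset.mem_insert_of_mem h)) with
                ⟨c, hc, hEc⟩ | ⟨u, hu, huK, huv, hE1, c, hc, hE2⟩
              · exact Or.inl ⟨c, Finset.mem_insert_of_mem hc, hEc⟩
              · refine Or.inr ⟨u, hW'sub hu, ?_, huv, hE1, c, Finset.mem_insert_of_mem hc, hE2⟩
                intro h
                rcases Finset.mem_insert.mp h with rfl | h
                · exact hxW' hu
                · exact huK h
            · have hEvx : E v x := by
                by_contra hne
                exact hvW' (by simp [hW'def, hv, hne, hvx])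
              exact Or.inl ⟨x, Finset.mem_insert_self x K', hEvx⟩
  exact main W.card W le_rfl

section Finite

variable [Fintype V] (E : V → V → Prop) (T : Set V)

/-- "1-good" data: a structure yielding a full quasi-kernel of `G^∞`. -/
def CaseIData : Prop :=
  ∃ Q P : Set V, Q.Nonempty ∧ (∀ p ∈ P, p ∉ T) ∧ (∀ q ∈ Q, q ∉ P) ∧
    (∀ a, (a ∈ Q ∨ a ∈ P) → ∀ b, (b ∈ Q ∨ b ∈ P) → a ≠ b → ¬E a b) ∧
    (∀ v, v ∉ Q → v ∉ P → ((∃ c, (c ∈ Q ∨ c ∈ P) ∧ c ≠ v ∧ E v c) ∨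
      (∃ u, u ∉ Q ∧ u ∉ P ∧ u ≠ v ∧ E v u ∧ ∃ c, (c ∈ Q ∨ c ∈ P) ∧ c ≠ u ∧ E u c))) ∧
    (∀ q ∈ Q, q ∉ T →
      ∃ u, u ∉ Q ∧ u ∉ P ∧ u ≠ q ∧ E q u ∧ ∃ c, (c ∈ Q ∨ c ∈ P) ∧ c ≠ u ∧ E u c)

/-- From a quasi-kernel containing a terminal vertex or a "router", build 1-good data. -/
theorem mk_caseI (J : Finset V)
    (hind : ∀ a ∈ J, ∀ b ∈ J, a ≠ b → ¬E a b)
    (hcov : ∀ v, v ∉ J → ((∃ c ∈ J, E v c) ∨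
      ∃ u, u ∉ J ∧ u ≠ v ∧ E v u ∧ ∃ c ∈ J, E u c))
    (q₀ : V) (hq₀ : q₀ ∈ J)
    (hgood : q₀ ∈ T ∨ ∃ u, u ∉ J ∧ u ≠ q₀ ∧ E q₀ u ∧ ∃ c ∈ J, E u c) :
    CaseIData E T := by
  classical
  set router : V → Prop :=
    fun q => ∃ u, u ∉ J ∧ u ≠ q ∧ E q u ∧ ∃ c ∈ J, E u c with hrouter
  refine ⟨{q | q ∈ J ∧ (q ∈ T ∨ router q)}, {q | q ∈ J ∧ ¬(q ∈ T ∨ router q)},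
    ⟨q₀, hq₀, hgood⟩, ?_, ?_, ?_, ?_, ?_⟩
  · rintro p ⟨-, hp⟩ hpT
    exact hp (Or.inl hpT)
  · rintro q ⟨-, hq⟩ ⟨-, hq'⟩
    exact hq' hq
  · rintro a ha b hb hab
    have haJ : a ∈ J := by rcases ha with h | h <;> exact h.1
    have hbJ : b ∈ J := by rcases hb with h | h <;> exact h.1
    exact hind a haJ b hbJ hab
  · intro v hv1 hv2
    have hvJ : v ∉ J := by
      intro h
      rcases Classical.em (v ∈ T ∨ router v) with h' | h'
      · exact hv1 ⟨h, h'⟩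
      · exact hv2 ⟨h, h'⟩
    have memJ : ∀ c, c ∈ J → (c ∈ {q | q ∈ J ∧ (q ∈ T ∨ router q)} ∨
        c ∈ {q | q ∈ J ∧ ¬(q ∈ T ∨ router q)}) := by
      intro c hc
      rcases Classical.em (c ∈ T ∨ router c) with h' | h'
      · exact Or.inl ⟨hc, h'⟩
      · exact Or.inr ⟨hc, h'⟩
    rcases hcov v hvJ with ⟨c, hc, hEc⟩ | ⟨u, huJ, huv, hE1, c, hc, hE2⟩
    · exact Or.inl ⟨c, memJ c hc, fun h => hvJ (h ▸ hc), hEc⟩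
    · refine Or.inr ⟨u, ?_, ?_, huv, hE1, c, memJ c hc, fun h => huJ (h ▸ hc), hE2⟩
      · intro h; exact huJ h.1
      · intro h; exact huJ h.1
  · rintro q ⟨hqJ, hq⟩ hqT
    rcases hq with h | ⟨u, huJ, huq, hE1, c, hc, hE2⟩
    · exact absurd h hqT
    · refine ⟨u, fun h => huJ h.1, fun h => huJ h.1, huq, hE1,
        c, ?_, fun h => huJ (h ▸ hc), hE2⟩
      rcases Classical.em (c ∈ T ∨ router c) with h' | h'
      · exact Or.inl ⟨hc, h'⟩
      · exact Or.inr ⟨hc, h'⟩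

/-- The finite structure theorem: configuration data for the `G^∞` construction. -/
theorem main_finite (hT : T.Nonempty) :
    ∃ (R H S σ1 : Set V) (t0 : V),
      t0 ∈ T ∧
      (∀ v ∈ R, v ∉ T) ∧
      (∀ v ∈ R, v ∉ H) ∧ (∀ v ∈ R, v ∉ S) ∧ (∀ v ∈ H, v ∉ S) ∧
      (∀ a, (a ∈ R ∨ a ∈ H) → ∀ b, (b ∈ R ∨ b ∈ H) → a ≠ b → ¬E a b) ∧
      (∀ a, (a ∈ R ∨ a ∈ S) → ∀ b, (b ∈ R ∨ b ∈ S) → a ≠ b → ¬E a b) ∧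
      (∀ v, v ∉ R → v ∈ σ1 → ¬(v ∈ T ∧ (v ∈ H ∨ v ∈ S)) →
        H.Nonempty ∧
        ((∃ c, (c ∈ H ∨ c ∈ R) ∧ c ≠ v ∧ E v c) ∨
         (∃ u, (u ∉ R ∧ u ∉ H ∧ u ∈ σ1 ∧ ¬(u ∈ T ∧ u ∈ S)) ∧ u ≠ v ∧ E v u ∧
            ∃ c, (c ∈ H ∨ c ∈ R) ∧ c ≠ u ∧ E u c))) ∧
      (∀ v, v ∉ R → v ∉ σ1 → ¬(v ∈ T ∧ (v ∈ H ∨ v ∈ S)) →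
        S.Nonempty ∧
        ((∃ c, (c ∈ S ∨ c ∈ R) ∧ c ≠ v ∧ E c v) ∨
         (∃ u, (u ∉ R ∧ u ∉ S ∧ u ∉ σ1 ∧ ¬(u ∈ T ∧ u ∈ H)) ∧ u ≠ v ∧ E u v ∧
            ∃ c, (c ∈ S ∨ c ∈ R) ∧ c ≠ u ∧ E c u))) := by
  classical
  obtain ⟨t0, ht0⟩ := hT
  by_cases hI : CaseIData E T
  · -- Case I: 1-good data exists: everything goes to side 1.
    obtain ⟨Q, P, hQne, hPT, hQP, hind, hg2, hg3⟩ := hI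
    refine ⟨P, Q, ∅, Set.univ, t0, ht0, hPT, ?_, ?_, ?_, ?_, ?_, ?_, ?_⟩
    · intro v hv hvQ; exact hQP v hvQ hv
    · intro v _ h; exact h
    · intro v _ h; exact h
    · intro a ha b hb hab
      exact hind a ha.symm b hb.symm hab
    · intro a ha b hb hab
      rcases ha with ha | ha
      · rcases hb with hb | hb
        · exact hind a (Or.inr ha) b (Or.inr hb) hab
        · exact absurd hb (Set.notMem_empty b)
      · exact absurd ha (Set.notMem_empty a)
    · intro v hvP _ hneg
      refine ⟨hQne, ?_⟩
      by_cases hvQ : v ∈ Q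
      · have hvT : v ∉ T := fun h => hneg ⟨h, Or.inl hvQ⟩
        obtain ⟨u, hu1, hu2, hu3, hu4, c, hc, hc2, hc3⟩ := hg3 v hvQ hvT
        exact Or.inr ⟨u, ⟨hu2, hu1, trivial, fun h => h.2⟩, hu3, hu4,
          c, hc, hc2, hc3⟩
      · rcases hg2 v hvQ hvP with ⟨c, hc, hc2, hc3⟩ | ⟨u, hu1, hu2, hu3, hu4, c, hc, hc2, hc3⟩
        · exact Or.inl ⟨c, hc, hc2, hc3⟩
        · exact Or.inr ⟨u, ⟨hu2, hu1, trivial, fun h => h.2⟩, hu3, hu4,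
            c, hc, hc2, hc3⟩
    · intro v _ hv2 _
      exact absurd trivial hv2
  · -- Case III: quasi-kernel K, quasi-sink S' of the unseen part.
    obtain ⟨K, -, hKind, hKcov⟩ := exists_qk E Finset.univ
    have hKcov' : ∀ v, v ∉ K → ((∃ c ∈ K, E v c) ∨
        ∃ u, u ∉ K ∧ u ≠ v ∧ E v u ∧ ∃ c ∈ K, E u c) := by
      intro v hv
      rcases hKcov v (Finset.mem_univ v) hv with h | ⟨u, -, h⟩
      · exact Or.inl h
      · exact Or.inr ⟨u, h⟩
    -- no terminal in K
    have hKT : ∀ t ∈ T, t ∉ K := by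
      intro t ht htK
      exact hI (mk_caseI E T K hKind hKcov' t htK (Or.inl ht))
    -- no routers in K (F1b)
    have hF1b : ∀ k ∈ K, ∀ u, u ∉ K → E k u → ∀ c ∈ K, ¬E u c := by
      intro k hk u huK hE c hc hE2
      exact hI (mk_caseI E T K hKind hKcov' k hk
        (Or.inr ⟨u, huK, fun h => huK (h ▸ hk), hE, c, hc, hE2⟩))
    set V' : Finset V := Finset.univ.filter (fun v => v ∉ K ∧ ¬∃ k ∈ K, E k v) with hV'def
    have hV'K : ∀ v ∈ V', v ∉ K := by
      intro v hv; exact (Finset.mem_filter.mp hv).2.1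
    have hV'in : ∀ v ∈ V', ∀ k ∈ K, ¬E k v := by
      intro v hv k hk hE
      exact (Finset.mem_filter.mp hv).2.2 ⟨k, hk, hE⟩
    have hV'mem : ∀ v, v ∉ K → (¬∃ k ∈ K, E k v) → v ∈ V' := by
      intro v h1 h2
      exact Finset.mem_filter.mpr ⟨Finset.mem_univ v, h1, h2⟩
    have hV'ne : V'.Nonempty := by
      have ht0K : t0 ∉ K := hKT t0 ht0
      by_cases h : ∃ k ∈ K, E k t0
      · obtain ⟨k, hk, hEk⟩ := h
        rcases hKcov' t0 ht0K with ⟨c, hc, hEc⟩ | ⟨u, huK, hut, hEu, c, hc, hEc⟩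
        · exact absurd hEc (hF1b k hk t0 ht0K hEk c hc)
        · by_cases h2 : ∃ k ∈ K, E k u
          · obtain ⟨k', hk', hEk'⟩ := h2
            exact absurd hEc (hF1b k' hk' u huK hEk' c hc)
          · exact ⟨u, hV'mem u huK h2⟩
      · exact ⟨t0, hV'mem t0 ht0K h⟩
    obtain ⟨S', hS'sub, hS'ind, hS'cov⟩ := exists_qk (fun a b => E b a) V'
    have hS'V' : ∀ s ∈ S', s ∈ V' := fun s hs => hS'sub hs
    have hS'ne : S'.Nonempty := by
      obtain ⟨v, hv⟩ := hV'ne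
      by_cases hvS : v ∈ S'
      · exact ⟨v, hvS⟩
      · rcases hS'cov v hv hvS with ⟨c, hc, -⟩ | ⟨u, -, -, -, -, c, hc, -⟩ <;> exact ⟨c, hc⟩
    -- every member of S' sees K  (f3')
    have hf3 : ∀ l ∈ S', ∃ c ∈ K, E l c := by
      intro l hl
      by_contra hd1
      push_neg at hd1
      have hlK : l ∉ K := hV'K l (hS'V' l hl)
      -- J := insert l K is a quasi-kernel with router l
      have hJind : ∀ a ∈ insert l K, ∀ b ∈ insert l K, a ≠ b → ¬E a b := by
        intro a ha b hb hab
        rcases Finset.mem_insert.mp ha with ha' | ha' <;>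
          rcases Finset.mem_insert.mp hb with hb' | hb'
        · exact absurd (ha'.trans hb'.symm) hab
        · exact fun hE => hd1 b hb' (ha' ▸ hE)
        · exact fun hE => hV'in l (hS'V' l hl) a ha' (hb' ▸ hE)
        · exact hKind a ha' b hb' hab
      have hJcov : ∀ v, v ∉ insert l K → ((∃ c ∈ insert l K, E v c) ∨
          ∃ u, u ∉ insert l K ∧ u ≠ v ∧ E v u ∧ ∃ c ∈ insert l K, E u c) := by
        intro v hv
        have hvK : v ∉ K := fun h => hv (Finset.mem_insert_of_mem h)
        rcases hKcov' v hvK with ⟨c, hc, hEc⟩ | ⟨u, huK, huv, hEu, c, hc, hEc⟩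
        · exact Or.inl ⟨c, Finset.mem_insert_of_mem hc, hEc⟩
        · refine Or.inr ⟨u, ?_, huv, hEu, c, Finset.mem_insert_of_mem hc, hEc⟩
          intro h
          rcases Finset.mem_insert.mp h with rfl | h
          · exact hd1 c hc hEc
          · exact huK h
      have hrout : ∃ u, u ∉ insert l K ∧ u ≠ l ∧ E l u ∧ ∃ c ∈ insert l K, E u c := by
        rcases hKcov' l hlK with ⟨c, hc, hEc⟩ | ⟨u, huK, hul, hEu, c, hc, hEc⟩
        · exact absurd hEc (hd1 c hc)
        · refine ⟨u, ?_, hul, hEu, c, Finset.mem_insert_of_mem hc, hEc⟩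
          intro h
          rcases Finset.mem_insert.mp h with rfl | h
          · exact hd1 c hc hEc
          · exact huK h
      exact hI (mk_caseI E T (insert l K) hJind hJcov l (Finset.mem_insert_self l K)
        (Or.inr hrout))
    -- the configuration
    refine ⟨{k | k ∈ K ∧ ¬∃ s ∈ S', E s k}, {k | k ∈ K ∧ ∃ s ∈ S', E s k},
      {v | v ∈ S'}, {v | v ∈ S'}, t0, ht0, ?_, ?_, ?_, ?_, ?_, ?_, ?_, ?_⟩
    · rintro v ⟨hv, -⟩ hvT
      exact hKT v hvT hv
    · rintro v ⟨-, hv⟩ ⟨-, hv'⟩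
      exact hv hv'
    · rintro v ⟨hv, -⟩ hv'
      exact hV'K v (hS'V' v hv') hv
    · rintro v ⟨hv, -⟩ hv'
      exact hV'K v (hS'V' v hv') hv
    · intro a ha b hb hab
      have haK : a ∈ K := by rcases ha with h | h <;> exact h.1
      have hbK : b ∈ K := by rcases hb with h | h <;> exact h.1
      exact hKind a haK b hbK hab
    · intro a ha b hb hab
      rcases ha with ha | ha <;> rcases hb with hb | hb
      · exact hKind a ha.1 b hb.1 hab
      · exact fun hE => hV'in b (hS'V' b hb) a ha.1 hE
      · exact fun hE => hb.2 ⟨a, ha, hE⟩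
      · exact hS'ind b hb a ha (Ne.symm hab)
    · -- hout
      intro v hvR hvσ hneg
      have hvS : v ∈ S' := hvσ
      refine ⟨?_, ?_⟩
      · -- H nonempty
        by_contra hH
        obtain ⟨l, hl⟩ := hS'ne
        obtain ⟨c, hc, hEc⟩ := hf3 l hl
        have hcR : c ∈ {k | k ∈ K ∧ ¬∃ s ∈ S', E s k} := by
          refine ⟨hc, ?_⟩
          intro h
          exact hH ⟨c, hc, h⟩
        exact hcR.2 ⟨l, hl, hEc⟩
      · obtain ⟨c, hc, hEc⟩ := hf3 v hvS
        have hcv : c ≠ v := fun h => hV'K v (hS'V' v hvS) (h ▸ hc)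
        refine Or.inl ⟨c, ?_, hcv, hEc⟩
        rcases Classical.em (∃ s ∈ S', E s c) with h | h
        · exact Or.inl ⟨hc, h⟩
        · exact Or.inr ⟨hc, h⟩
    · -- hin
      intro v hvR hvσ hneg
      have hvS : v ∉ S' := hvσ
      refine ⟨⟨hS'ne.choose, hS'ne.choose_spec⟩, ?_⟩
      by_cases hvH : v ∈ {k | k ∈ K ∧ ∃ s ∈ S', E s k}
      · obtain ⟨hvK, s, hs, hEs⟩ := hvH
        exact Or.inl ⟨s, Or.inl hs, fun h => hvS (h ▸ hs), hEs⟩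
      · have hvK : v ∉ K := by
          intro h
          rcases Classical.em (∃ s ∈ S', E s v) with h' | h'
          · exact hvH ⟨h, h'⟩
          · exact hvR ⟨h, h'⟩
        by_cases hvV' : v ∈ V'
        · rcases hS'cov v hvV' hvS with ⟨c, hc, hEc⟩ | ⟨u, huV', huS, huv, hEu, c, hc, hEc⟩
          · exact Or.inl ⟨c, Or.inl hc, fun h => hvS (h ▸ hc), hEc⟩
          · refine Or.inr ⟨u, ⟨?_, huS, huS, ?_⟩, huv, hEu, c, Or.inl hc,
              fun h => huS (h ▸ hc), hEc⟩
            · rintro ⟨hu, -⟩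
              exact hV'K u huV' hu
            · rintro ⟨-, hu⟩
              exact hV'K u huV' hu.1
        · have : ∃ k ∈ K, E k v := by
            by_contra h
            exact hvV' (hV'mem v hvK h)
          obtain ⟨k, hk, hEk⟩ := this
          rcases Classical.em (∃ s ∈ S', E s k) with hks | hks
          · obtain ⟨s, hs, hEsk⟩ := hks
            refine Or.inr ⟨k, ⟨?_, ?_, ?_, ?_⟩, fun h => hvK (h ▸ hk), hEk,
              s, Or.inl hs, ?_, hEsk⟩
            · rintro ⟨-, h⟩
              exact h ⟨s, hs, hEsk⟩
            · intro h
              exact hV'K k (hS'V' k h) hk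
            · intro h
              exact hV'K k (hS'V' k h) hk
            · rintro ⟨hkT, -⟩
              exact hKT k hkT hk
            · intro h
              exact hV'K k (hS'V' k (h ▸ hs)) hk
          · exact Or.inl ⟨k, Or.inr ⟨hk, hks⟩, fun h => hvK (h ▸ hk), hEk⟩

end Finite

section Lift

variable (E : V → V → Prop) (T R Hs Ss σ1 : Set V) (t0 : V)

/-- Seed pattern: read prefix, then a host letter, then nothing or the fixed terminal. -/
def InPat (x : List V) : Prop :=
  ∃ w q r, SplitAt R x w q r ∧ q ∈ Hs ∧ (r = [] ∨ r = [t0])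

/-- The stop letter of `x` lies in `σ1`. -/
def SideOf (x : List V) : Prop := ∃ w s r, SplitAt R x w s r ∧ s ∈ σ1

/-- Side-one part of `G^∞` determined by the configuration. -/
def XOne : Set {x : List V // IsGVtx T x} :=
  {x | InPat R Hs t0 x.1 ∨
    (¬InPat R Hs t0 x.1 ∧ ¬InPat R Ss t0 x.1 ∧ SideOf R σ1 x.1)}

/-- The quasi-kernel (seed) set. -/
def APat : Set {x : List V // IsGVtx T x} := {x | InPat R Hs t0 x.1}

theorem inpat_iff {x w : List V} {s : V} {r : List V} (hsp : SplitAt R x w s r) :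
    InPat R Hs t0 x ↔ (s ∈ Hs ∧ (r = [] ∨ r = [t0])) := by
  constructor
  · rintro ⟨w', q', r', hsp', hq', hr'⟩
    obtain ⟨-, h2, h3⟩ := split_unique hsp hsp'
    exact ⟨h2 ▸ hq', h3 ▸ hr'⟩
  · rintro ⟨h1, h2⟩
    exact ⟨w, s, r, hsp, h1, h2⟩

theorem sideof_iff {x w : List V} {s : V} {r : List V} (hsp : SplitAt R x w s r) :
    SideOf R σ1 x ↔ s ∈ σ1 := by
  constructor
  · rintro ⟨w', s', r', hsp', hs'⟩
    obtain ⟨-, h2, -⟩ := split_unique hsp hsp'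
    exact h2 ▸ hs'
  · intro h
    exact ⟨w, s, r, hsp, h⟩

/-- Terminal stop letters are final. -/
theorem rest_nil_of_terminal {x : List V} (hx : IsGVtx T x) {w : List V} {s : V}
    {r : List V} (hsp : SplitAt R x w s r) (hsT : s ∈ T) : r = [] := by
  obtain ⟨l, t, hx, hl, ht⟩ := hx
  obtain ⟨e, -, -⟩ := hsp
  rcases r.eq_nil_or_concat with rfl | ⟨r', t', rfl⟩
  · rfl
  · -- x = w ++ s :: (r' ++ [t']) = (w ++ s :: r') ++ [t'], so l = w ++ s :: r' ∋ s
    exfalso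
    have he : l ++ [t] = (w ++ s :: r') ++ [t'] := by
      rw [← hx, e]; simp
    have : l = w ++ s :: r' := by
      have := List.append_inj' he (by simp)
      simpa using this.1
    exact hl s (by simp [this]) hsT

/-- Non-terminal final letters are impossible; the rest is `[]` only for terminals. -/
theorem terminal_of_rest_nil {x : List V} (hx : IsGVtx T x) {w : List V} {s : V}
    (hsp : SplitAt R x w s []) : s ∈ T := by
  obtain ⟨l, t, hx, hl, ht⟩ := hx
  obtain ⟨e, -, -⟩ := hsp
  have he : l ++ [t] = w ++ [s] := by rw [← hx, e]
  have := List.append_inj' he (by simp)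
  have : t = s := by simpa using this.2
  exact this ▸ ht

/-- Build a valid vertex from a nonterminal prefix and a terminal ending. -/
theorem gvtx_mk {l : List V} {t : V} (hl : ∀ v ∈ l, v ∉ T) (ht : t ∈ T) :
    IsGVtx T (l ++ [t]) := ⟨l, t, rfl, hl, ht⟩

theorem gedge_mk {x y : {x : List V // IsGVtx T x}} {w : List V} {a b : V}
    {ra rb : List V} (hx : (x : List V) = w ++ a :: ra) (hy : (y : List V) = w ++ b :: rb)
    (hab : a ≠ b) (hE : E a b) : GEdge E T x y := by
  refine ⟨w.length, a, b, ?_, ?_, ?_, hab, hE⟩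
  · rw [hx, hy, List.take_left' rfl, List.take_left' rfl]
  · rw [hx, List.getElem?_append_right le_rfl]
    simp
  · rw [hy, List.getElem?_append_right le_rfl]
    simp

/-- Auxiliary: a first difference between two seed vertices occurs within the read
prefix or at the stop letter. -/
theorem firstdiff_le {x y : {x : List V // IsGVtx T x}}
    {wx : List V} {qx : V} {rx : List V}
    (hspx : SplitAt R (x : List V) wx qx rx) (hrx : rx = [] ∨ rx = [t0])
    {wy : List V} {qy : V} {ry : List V}
    (hspy : SplitAt R (y : List V) wy qy ry) (hry : ry = [] ∨ ry = [t0])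
    {i : ℕ} {a b : V} (hteq : (x : List V).take i = (y : List V).take i)
    (ha : (x : List V)[i]? = some a) (hb : (y : List V)[i]? = some b) (hab : a ≠ b) :
    i ≤ wx.length := by
  by_contra hlen
  push_neg at hlen
  have hilen : i < (x : List V).length := (List.getElem?_eq_some_iff.mp ha).1
  rcases hrx with rfl | rfl
  · rw [hspx.1] at hilen
    simp at hilen
    omega
  · rw [hspx.1] at hilen
    simp at hilen
    have hieq : i = wx.length + 1 := by omega
    subst hieq
    have htx : (x : List V).take (wx.length + 1) = wx ++ [qx] := by
      rw [hspx.1]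
      have : wx ++ qx :: [t0] = (wx ++ [qx]) ++ [t0] := by simp
      rw [this, List.take_left' (by simp)]
    have hty : (y : List V).take (wx.length + 1) = wx ++ [qx] := by
      rw [← hteq, htx]
    have hyeq : (y : List V) = (wx ++ [qx]) ++ (y : List V).drop (wx.length + 1) := by
      conv_lhs => rw [← List.take_append_drop (wx.length + 1) (y : List V)]
      rw [hty]
    have hspy2 : SplitAt R (y : List V) wx qx ((y : List V).drop (wx.length + 1)) := by
      refine ⟨by rw [hyeq]; simp, hspx.2.1, hspx.2.2⟩
    obtain ⟨hw, hq, hr⟩ := split_unique hspy hspy2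
    rcases hry with h | h
    · have hylen : (y : List V).length = wx.length + 1 := by
        rw [hspy.1, h, hw]
        simp
      have := (List.getElem?_eq_some_iff.mp hb).1
      omega
    · have hyform : (y : List V) = wx ++ qx :: [t0] := by
        rw [hspy.1, hw, hq, h]
      have hbval : b = t0 := by
        rw [hyform] at hb
        rw [List.getElem?_append_right (by simp)] at hb
        simp at hb
        exact hb.symm
      have haval : a = t0 := by
        rw [hspx.1] at ha
        rw [List.getElem?_append_right (by simp)] at ha
        simp at ha
        exact ha.symm
      exact hab (haval.trans hbval.symm)

/-- The key first-difference lemma: a first difference between two seed vertices occurs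
at letters that both lie in `R ∪ Hs`. -/
theorem firstdiff {x y : {x : List V // IsGVtx T x}}
    (hx : InPat R Hs t0 (x : List V)) (hy : InPat R Hs t0 (y : List V))
    {i : ℕ} {a b : V} (hteq : (x : List V).take i = (y : List V).take i)
    (ha : (x : List V)[i]? = some a) (hb : (y : List V)[i]? = some b) (hab : a ≠ b) :
    (a ∈ R ∨ a ∈ Hs) ∧ (b ∈ R ∨ b ∈ Hs) := by
  obtain ⟨wx, qx, rx, hspx, hqx, hrx⟩ := hx
  obtain ⟨wy, qy, ry, hspy, hqy, hry⟩ := hy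
  have hix : i ≤ wx.length := firstdiff_le T R t0 hspx hrx hspy hry hteq ha hb hab
  have hiy : i ≤ wy.length := firstdiff_le T R t0 hspy hry hspx hrx hteq.symm hb ha hab.symm
  constructor
  · rcases lt_or_eq_of_le hix with h | h
    · left
      rw [hspx.1, List.getElem?_append_left (by simpa using h)] at ha
      exact hspx.2.1 a (List.mem_of_getElem? ha)
    · right
      rw [hspx.1, h, List.getElem?_append_right le_rfl] at ha
      simp at ha
      exact ha ▸ hqx
  · rcases lt_or_eq_of_le hiy with h | h
    · left
      rw [hspy.1, List.getElem?_append_left (by simpa using h)] at hb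
      exact hspy.2.1 b (List.mem_of_getElem? hb)
    · right
      rw [hspy.1, h, List.getElem?_append_right le_rfl] at hb
      simp at hb
      exact hb ▸ hqy

end Lift

section Lift2

variable (E : V → V → Prop) (T R Hs Ss σ1 : Set V) (t0 : V)

theorem target_exists (hRT : ∀ v ∈ R, v ∉ T) (ht0 : t0 ∈ T)
    (hRH : ∀ v ∈ R, v ∉ Hs) (hHne : Hs.Nonempty)
    {w : List V} (hw : ∀ v ∈ w, v ∈ R) {c : V} (hc : c ∈ Hs ∨ c ∈ R) :
    ∃ y : {x : List V // IsGVtx T x},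
      (∃ tl, (y : List V) = w ++ c :: tl) ∧ InPat R Hs t0 (y : List V) := by
  have hwT : ∀ v ∈ w, v ∉ T := fun v hv => hRT v (hw v hv)
  rcases hc with hc | hc
  · have hcR : c ∉ R := fun h => hRH c h hc
    by_cases hcT : c ∈ T
    · refine ⟨⟨w ++ [c], gvtx_mk T hwT hcT⟩, ⟨[], rfl⟩, ?_⟩
      exact ⟨w, c, [], ⟨rfl, hw, hcR⟩, hc, Or.inl rfl⟩
    · refine ⟨⟨w ++ c :: [t0], ⟨w ++ [c], t0, by simp, ?_, ht0⟩⟩, ⟨[t0], rfl⟩, ?_⟩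
      · intro v hv
        rcases List.mem_append.mp hv with h | h
        · exact hwT v h
        · simp at h
          exact h ▸ hcT
      · exact ⟨w, c, [t0], ⟨rfl, hw, hcR⟩, hc, Or.inr rfl⟩
  · obtain ⟨q, hq⟩ := hHne
    have hqR : q ∉ R := fun h => hRH q h hq
    have hwc : ∀ v ∈ w ++ [c], v ∈ R := by
      intro v hv
      rcases List.mem_append.mp hv with h | h
      · exact hw v h
      · simp at h
        exact h ▸ hc
    have hwcT : ∀ v ∈ w ++ [c], v ∉ T := fun v hv => hRT v (hwc v hv)
    by_cases hqT : q ∈ T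
    · refine ⟨⟨w ++ c :: [q], ⟨w ++ [c], q, by simp, hwcT, hqT⟩⟩, ⟨[q], rfl⟩, ?_⟩
      exact ⟨w ++ [c], q, [], ⟨by simp, hwc, hqR⟩, hq, Or.inl rfl⟩
    · refine ⟨⟨w ++ c :: [q, t0], ⟨w ++ [c, q], t0, by simp, ?_, ht0⟩⟩, ⟨[q, t0], rfl⟩, ?_⟩
      · intro v hv
        rcases List.mem_append.mp hv with h | h
        · exact hwT v h
        · simp at h
          rcases h with rfl | rfl
          · exact fun hh => hRT v (hc) hh
          · exact hqT
      · exact ⟨w ++ [c], q, [t0], ⟨by simp, hwc, hqR⟩, hq, Or.inr rfl⟩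

theorem mid_exists (hRT : ∀ v ∈ R, v ∉ T) (ht0 : t0 ∈ T)
    {w : List V} (hw : ∀ v ∈ w, v ∈ R) {u : V}
    (hu : u ∉ R ∧ u ∉ Hs ∧ u ∈ σ1 ∧ ¬(u ∈ T ∧ u ∈ Ss)) :
    ∃ m : {x : List V // IsGVtx T x},
      (∃ tl, (m : List V) = w ++ u :: tl) ∧ m ∈ XOne T R Hs Ss σ1 t0 := by
  obtain ⟨huR, huH, huσ, huTS⟩ := hu
  have hwT : ∀ v ∈ w, v ∉ T := fun v hv => hRT v (hw v hv)
  by_cases huT : u ∈ T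
  · refine ⟨⟨w ++ [u], gvtx_mk T hwT huT⟩, ⟨[], rfl⟩, Or.inr ⟨?_, ?_, ?_⟩⟩
    · intro h
      exact huH ((inpat_iff R Hs t0 (x := w ++ [u]) ⟨rfl, hw, huR⟩).mp h).1
    · intro h
      exact huTS ⟨huT, ((inpat_iff R Ss t0 (x := w ++ [u]) ⟨rfl, hw, huR⟩).mp h).1⟩
    · exact ⟨w, u, [], ⟨rfl, hw, huR⟩, huσ⟩
  · have hval : IsGVtx T (w ++ u :: [u, t0]) := by
      refine ⟨w ++ [u, u], t0, by simp, ?_, ht0⟩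
      intro v hv
      rcases List.mem_append.mp hv with h | h
      · exact hwT v h
      · simp at h
        rcases h with rfl | rfl <;> exact huT
    have hsp : SplitAt R (w ++ u :: [u, t0]) w u [u, t0] := ⟨rfl, hw, huR⟩
    have hrest : ¬([u, t0] = ([] : List V) ∨ [u, t0] = [t0]) := by
      rintro (h | h) <;> simp at h
    refine ⟨⟨w ++ u :: [u, t0], hval⟩, ⟨[u, t0], rfl⟩, Or.inr ⟨?_, ?_, ?_⟩⟩
    · intro h
      exact hrest ((inpat_iff R Hs t0 hsp).mp h).2
    · intro h
      exact hrest ((inpat_iff R Ss t0 hsp).mp h).2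
    · exact ⟨w, u, [u, t0], hsp, huσ⟩

variable {F : {x : List V // IsGVtx T x} → {x : List V // IsGVtx T x} → Prop}
  {W : Set {x : List V // IsGVtx T x}}

theorem pathLeIn_zero {x} (hx : x ∈ W) : PathLeIn F W 2 x x :=
  ⟨0, by omega, fun _ => x, rfl, rfl, fun i _ => hx, fun i h => absurd h (by omega)⟩

theorem pathLeIn_one {x y} (hx : x ∈ W) (hy : y ∈ W) (hE : F x y) :
    PathLeIn F W 2 x y := by
  refine ⟨1, by omega, fun i => if i = 0 then x else y, by simp, by simp, ?_, ?_⟩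
  · intro i _
    by_cases h : i = 0 <;> simp [h, hx, hy]
  · intro i hi
    have : i = 0 := by omega
    subst this
    simpa using hE

theorem pathLeIn_two {x m y} (hx : x ∈ W) (hm : m ∈ W) (hy : y ∈ W)
    (h1 : F x m) (h2 : F m y) : PathLeIn F W 2 x y := by
  refine ⟨2, le_rfl, fun i => if i = 0 then x else if i = 1 then m else y,
    by simp, by simp, ?_, ?_⟩
  · intro i _
    by_cases h : i = 0
    · simp [h, hx]
    · by_cases h' : i = 1 <;> simp [h, h', hm, hy]
  · intro i hi
    interval_cases i
    · simpa using h1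
    · simpa using h2
    
theorem onesided
    (hRT : ∀ v ∈ R, v ∉ T) (ht0 : t0 ∈ T)
    (hRH : ∀ v ∈ R, v ∉ Hs)
    (ind1 : ∀ a, (a ∈ R ∨ a ∈ Hs) → ∀ b, (b ∈ R ∨ b ∈ Hs) → a ≠ b → ¬E a b)
    (hout : ∀ v, v ∉ R → v ∈ σ1 → ¬(v ∈ T ∧ (v ∈ Hs ∨ v ∈ Ss)) →
      Hs.Nonempty ∧
      ((∃ c, (c ∈ Hs ∨ c ∈ R) ∧ c ≠ v ∧ E v c) ∨
       (∃ u, (u ∉ R ∧ u ∉ Hs ∧ u ∈ σ1 ∧ ¬(u ∈ T ∧ u ∈ Ss)) ∧ u ≠ v ∧ E v u ∧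
          ∃ c, (c ∈ Hs ∨ c ∈ R) ∧ c ≠ u ∧ E u c))) :
    InClass (GEdge E T) 2 (XOne T R Hs Ss σ1 t0) := by
  refine ⟨APat T R Hs t0, fun x hx => Or.inl hx, ?_, ?_⟩
  · rintro a ha b hb ⟨i, va, vb, hteq, hva, hvb, hne, hE⟩
    obtain ⟨h1, h2⟩ := firstdiff T R Hs t0 ha hb hteq hva hvb hne
    exact ind1 va h1 vb h2 hne hE
  · intro x hx
    rcases hx with hA | ⟨hnA, hnS, hσ⟩
    · exact ⟨x, hA, pathLeIn_zero T (Or.inl hA)⟩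
    · obtain ⟨w, s, r, hsp, hs1⟩ := hσ
      have hxX : x ∈ XOne T R Hs Ss σ1 t0 := Or.inr ⟨hnA, hnS, ⟨w, s, r, hsp, hs1⟩⟩
      have hsneg : ¬(s ∈ T ∧ (s ∈ Hs ∨ s ∈ Ss)) := by
        rintro ⟨hsT, hcase⟩
        have hr : r = [] := rest_nil_of_terminal T R x.2 hsp hsT
        rcases hcase with h | h
        · exact hnA ((inpat_iff R Hs t0 hsp).mpr ⟨h, Or.inl hr⟩)
        · exact hnS ((inpat_iff R Ss t0 hsp).mpr ⟨h, Or.inl hr⟩)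
      obtain ⟨hHne, hroute⟩ := hout s hsp.2.2 hs1 hsneg
      have hw : ∀ v ∈ w, v ∈ R := hsp.2.1
      rcases hroute with ⟨c, hc, hcs, hE⟩ | ⟨u, hu, hus, hE1, c, hc, hcu, hE2⟩
      · obtain ⟨y, ⟨tl, hy⟩, hyA⟩ := target_exists T R Hs t0 hRT ht0 hRH hHne hw hc
        exact ⟨y, hyA, pathLeIn_one T hxX (Or.inl hyA)
          (gedge_mk E T hsp.1 hy (Ne.symm hcs) hE)⟩
      · obtain ⟨m, ⟨tm, hm⟩, hmX⟩ := mid_exists T R Hs Ss σ1 t0 hRT ht0 hw hu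
        obtain ⟨y, ⟨tl, hy⟩, hyA⟩ := target_exists T R Hs t0 hRT ht0 hRH hHne hw hc
        exact ⟨y, hyA, pathLeIn_two T hxX hmX (Or.inl hyA)
          (gedge_mk E T hsp.1 hm (Ne.symm hus) hE1)
          (gedge_mk E T hm hy (Ne.symm hcu) hE2)⟩

theorem gedge_flip {x y : {x : List V // IsGVtx T x}} :
    GEdge (fun a b => E b a) T x y ↔ GEdge E T y x := by
  constructor <;> rintro ⟨i, a, b, ht, ha, hb, hne, hE⟩ <;>
    exact ⟨i, b, a, ht.symm, hb, ha, hne.symm, hE⟩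

theorem pathLeIn_rev {F F' : {x : List V // IsGVtx T x} → {x : List V // IsGVtx T x} → Prop}
    {W : Set {x : List V // IsGVtx T x}} (hFF : ∀ p q, F p q → F' q p) {n : ℕ} {x y}
    (h : PathLeIn F W n x y) : PathLeIn F' W n y x := by
  obtain ⟨k, hk, f, h0, hkx, hmem, hedge⟩ := h
  refine ⟨k, hk, fun i => f (k - i), by simp [hkx], by simp [h0],
    fun i _ => hmem _ (by omega), ?_⟩
  intro i hi
  have he := hedge (k - i - 1) (by omega)
  have h1 : k - i - 1 + 1 = k - i := by omega
  have h2 : k - (i + 1) = k - i - 1 := by omega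
  rw [h1] at he
  show F' (f (k - i)) (f (k - (i + 1)))
  rw [h2]
  exact hFF _ _ he

end Lift2

end Ginf

/-- For every finite terminated digraph `G = (V,E,T)`, the digraph `G^∞` is in `IO(2,2)`. -/
theorem ginf_io22 {V : Type*} [Fintype V] (E : V → V → Prop)
    (T : Set V) (hT : T.Nonempty) :
    IOClass (GEdge E T) 2 2 (Set.univ : Set {x : List V // IsGVtx T x}) := by
  classical
  obtain ⟨R, H, S, σ1, t0, ht0, hRT, hRH, hRS, hHS, ind1, ind2, hout, hin⟩ :=
    Ginf.main_finite E T hT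
  refine ⟨Ginf.XOne T R H S σ1 t0, Ginf.XOne T R S H σ1ᶜ t0, ?_, ?_, ?_, ?_⟩
  · -- the two parts cover everything
    ext x
    simp only [Set.mem_union, Set.mem_univ, iff_true]
    obtain ⟨w, s, r, hsp⟩ := Ginf.split_exists hRT x.1 x.2
    by_cases hH : Ginf.InPat R H t0 x.1
    · exact Or.inl (Or.inl hH)
    · by_cases hS : Ginf.InPat R S t0 x.1
      · exact Or.inr (Or.inl hS)
      · by_cases hs1 : s ∈ σ1
        · exact Or.inl (Or.inr ⟨hH, hS, ⟨w, s, r, hsp, hs1⟩⟩)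
        · exact Or.inr (Or.inr ⟨hS, hH, ⟨w, s, r, hsp, hs1⟩⟩)
  · -- the two parts are disjoint
    rw [Set.disjoint_left]
    intro x hx1 hx2
    obtain ⟨w, s, r, hsp⟩ := Ginf.split_exists hRT x.1 x.2
    rcases hx1 with hA | ⟨hnA, hnS, hσ⟩ <;> rcases hx2 with hB | ⟨hnB, hnA', hσ'⟩
    · have h1 := (Ginf.inpat_iff R H t0 hsp).mp hA
      have h2 := (Ginf.inpat_iff R S t0 hsp).mp hB
      exact hHS s h1.1 h2.1
    · exact hnA' hA
    · exact hnS hB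
    · have h1 := (Ginf.sideof_iff R σ1 hsp).mp hσ
      have h2 := (Ginf.sideof_iff R σ1ᶜ hsp).mp hσ'
      exact h2 h1
  · -- side one: quasi-kernel
    exact Ginf.onesided E T R H S σ1 t0 hRT ht0 hRH ind1 hout
  · -- side two: quasi-sink, via the flipped digraph
    have hflip := Ginf.onesided (fun a b => E b a) T R S H σ1ᶜ t0 hRT ht0 hRS
      (fun a ha b hb hab hE => ind2 b hb a ha (Ne.symm hab) hE)
      (fun v hvR hvσ hneg => hin v hvR hvσ
        (fun h => hneg ⟨h.1, Or.symm h.2⟩))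
    obtain ⟨B, hBsub, hBind, hBcov⟩ := hflip
    refine ⟨B, hBsub, ?_, ?_⟩
    · intro a ha b hb hE
      exact hBind b hb a ha ((Ginf.gedge_flip E T).mpr hE)
    · intro v hv
      obtain ⟨b, hb, hp⟩ := hBcov v hv
      exact ⟨b, hb, Ginf.pathLeIn_rev T (fun p q h => (Ginf.gedge_flip E T).mp h) hp⟩
end
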